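/- Let V be a finite-dimensional real inner product space, g an invertible linear map of V, and a vector x ∈ V with ‖x‖ = 1. Write g = k a u where k, u are orthogonal and a is self-adjoint positive with eigenvalues a₁ ≥ a₂ ≥ … ≥ a_d > 0. Suppose y is the orthogonal projection of x onto the eigenspace line of uᵗ a corresponding to the largest eigenvalue a₁, assumed simple. Then ‖g x‖ ≥ a₁ ‖y‖. -/

import Mathlib

open scoped RealInnerProductSpace

/-- Let `g = k a u` with `k, u` orthogonal and `a` self-adjoint positive definite with simple
largest eigenvalue `a₁`, and let `y` be the orthogonal projection of a unit vector `x` onto the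
line `u⁻¹·(a₁-eigenspace of a)`. Then `‖g x‖ ≥ a₁ ‖y‖`. -/
theorem stmt14 {V : Type*} [NormedAddCommGroup V] [InnerProductSpace ℝ V]
    [FiniteDimensional ℝ V]
    (k u : V ≃ₗᵢ[ℝ] V) (a : V →L[ℝ] V) (hsa : IsSelfAdjoint a)
    (hpos : ∀ v : V, v ≠ 0 → 0 < ⟪a v, v⟫)
    (a₁ : ℝ) (ha₁ : Module.End.HasEigenvalue (a : V →ₗ[ℝ] V) a₁)
    (hmax : ∀ μ : ℝ, Module.End.HasEigenvalue (a : V →ₗ[ℝ] V) μ → μ ≤ a₁)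
    (hsimple : Module.finrank ℝ (Module.End.eigenspace (a : V →ₗ[ℝ] V) a₁) = 1)
    (x : V) (hx : ‖x‖ = 1)
    (W : Submodule ℝ V)
    (hW : W = (Module.End.eigenspace (a : V →ₗ[ℝ] V) a₁).map
        u.symm.toLinearEquiv.toLinearMap)
    (y : V) (hy : y = (W.orthogonalProjection x : V)) :
    a₁ * ‖y‖ ≤ ‖k (a (u x))‖ := by
  -- a₁ > 0
  obtain ⟨v, hv, hvne⟩ := ha₁.exists_hasEigenvector
  have hvpos : 0 < ⟪a v, v⟫ := hpos v hvne
  have hav : a v = a₁ • v := by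
    have := Module.End.mem_eigenspace_iff.mp hv
    simpa using this
  have ha₁pos : 0 < a₁ := by
    have h1 : ⟪a v, v⟫ = a₁ * (‖v‖ * ‖v‖) := by
      rw [hav, real_inner_smul_left, real_inner_self_eq_norm_mul_norm]
    have hn : 0 < ‖v‖ * ‖v‖ := mul_pos (norm_pos_iff.mpr hvne) (norm_pos_iff.mpr hvne)
    nlinarith [hvpos]
  -- y ∈ W and u y is an eigenvector
  have hyW : y ∈ W := by rw [hy]; exact (W.orthogonalProjection x).2
  have huyE : u y ∈ Module.End.eigenspace (a : V →ₗ[ℝ] V) a₁ := by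
    rw [hW] at hyW
    obtain ⟨w, hwE, hwy⟩ := hyW
    have : u y = w := by
      have : y = u.symm w := hwy.symm
      simp [this]
    rwa [this]
  have hauy : a (u y) = a₁ • (u y) := by
    have := Module.End.mem_eigenspace_iff.mp huyE
    simpa using this
  -- symmetric
  have hsym : (a : V →ₗ[ℝ] V).IsSymmetric :=
    (ContinuousLinearMap.isSelfAdjoint_iff_isSymmetric.mp hsa)
  -- ⟪x, y⟫ = ‖y‖²
  have hproj : ⟪x - y, y⟫ = 0 := by
    have h1 : x - (W.orthogonalProjection x : V) ∈ Wᗮ :=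
      W.sub_starProjection_mem_orthogonal x
    rw [hy]
    exact (Submodule.mem_orthogonal' W _).mp h1 _ (W.orthogonalProjection x).2
  have hxy : ⟪x, y⟫ = ‖y‖ ^ 2 := by
    have : ⟪x, y⟫ - ⟪y, y⟫ = 0 := by
      rw [← inner_sub_left]; exact hproj
    have h2 : ⟪x, y⟫ = ⟪y, y⟫ := by linarith
    rw [h2, real_inner_self_eq_norm_sq]
  -- key inner product computation
  have hkey : ⟪a (u x), u y⟫ = a₁ * ‖y‖ ^ 2 := by
    have h1 : ⟪a (u x), u y⟫ = ⟪u x, a (u y)⟫ := hsym (u x) (u y)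
    rw [h1, hauy, real_inner_smul_right, u.inner_map_map, hxy]
  -- Cauchy–Schwarz
  have hcs : ⟪a (u x), u y⟫ ≤ ‖a (u x)‖ * ‖u y‖ := real_inner_le_norm _ _
  rw [LinearIsometryEquiv.norm_map] at hcs
  rw [LinearIsometryEquiv.norm_map]
  rcases eq_or_ne y 0 with h0 | h0
  · simp only [h0, norm_zero, mul_zero]
    positivity
  · have hyn : 0 < ‖y‖ := norm_pos_iff.mpr h0
    rw [hkey] at hcs
    calc a₁ * ‖y‖ = (a₁ * ‖y‖ ^ 2) / ‖y‖ := by field_simp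
      _ ≤ (‖a (u x)‖ * ‖y‖) / ‖y‖ := by gcongr
      _ = ‖a (u x)‖ := by field_simp
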